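/- Let U = ℂ. Let x1, x0 be Bessel sequences in X and u0 ∈ ℓ²(ℕ), with synthesis operators Ξ1, Ξ0 ∈ L(ℓ²(ℕ),X) and Υ0 ∈ L(ℓ²(ℕ),ℂ) (Υ0 w = ∑_k w_k u0(k)), and suppose the data-generation assumption holds. Assume either that there exists w ∈ Ker Ξ0 with Υ0 w ≠ 0, or that Σ_is ≠ {(A_s,B_s)}. Fix γ ∈ (0,1). Then the data (x1,x0,u0) are informative for stabilization with decay rate γ if and only if the range of Ξ0 is dense in X and there exists a linear map Ξ0† : Ran Ξ0 → ℓ²(ℕ) such that (a) Ξ0(Ξ0† x) = x for all x ∈ Ran Ξ0, (b) there exists K' ∈ L(X,ℂ) with K' x = Υ0(Ξ0† x) for all x ∈ Ran Ξ0, and (c) there exists F ∈ L(X) with F x = Ξ1(Ξ0† x) for all x ∈ Ran Ξ0 and F is power stable with decay rate γ. -/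

import Mathlib

noncomputable section

/-- `ℓ²(ℕ)`: the Hilbert space of square-summable complex sequences. -/
abbrev l2 : Type := lp (fun _ : ℕ => ℂ) 2

/-- `η` is a Bessel sequence in `Y`. -/
def Bessel {Y : Type} [NormedAddCommGroup Y] [InnerProductSpace ℂ Y] (η : ℕ → Y) : Prop :=
  ∃ α : ℝ, 0 < α ∧ ∀ y : Y, ∑' k : ℕ, ‖(inner ℂ y (η k) : ℂ)‖ ^ 2 ≤ α * ‖y‖ ^ 2

/-- `T` is the synthesis operator associated with `η`: `T w = ∑ₖ wₖ • ηₖ`. -/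
def IsSynthesis {Y : Type} [NormedAddCommGroup Y] [InnerProductSpace ℂ Y] (η : ℕ → Y)
    (T : l2 →L[ℂ] Y) : Prop :=
  ∀ w : l2, HasSum (fun k : ℕ => w k • η k) (T w)

/-- If `F0 + t • D` is uniformly bounded over all `t : ℂ`, then `D = 0`. -/
private lemma zero_of_unif_bdd {X : Type} [NormedAddCommGroup X] [InnerProductSpace ℂ X]
    (F0 D : X →L[ℂ] X) (C : ℝ) (h : ∀ t : ℂ, ‖F0 + t • D‖ ≤ C) : D = 0 := by
  by_contra hD
  have hDn : 0 < ‖D‖ := norm_pos_iff.mpr hD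
  have hC0 : 0 ≤ C := le_trans (norm_nonneg _) (by simpa using h 0)
  set t : ℂ := (((C + ‖F0‖ + 1) / ‖D‖ : ℝ) : ℂ) with ht
  have h1 : ‖t • D‖ ≤ C + ‖F0‖ := by
    have := h t
    calc ‖t • D‖ = ‖(F0 + t • D) - F0‖ := by rw [add_sub_cancel_left]
    _ ≤ ‖F0 + t • D‖ + ‖F0‖ := norm_sub_le _ _
    _ ≤ C + ‖F0‖ := by linarith
  have h2 : ‖t • D‖ = C + ‖F0‖ + 1 := by
    have hns : ‖t • D‖ = ‖t‖ * ‖D‖ := norm_smul t D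
    rw [hns, ht]
    have habs : ‖(((C + ‖F0‖ + 1) / ‖D‖ : ℝ) : ℂ)‖ = (C + ‖F0‖ + 1) / ‖D‖ := by
      rw [Complex.norm_real, Real.norm_eq_abs, abs_of_nonneg]
      positivity
    rw [habs, div_mul_cancel₀]
    exact ne_of_gt hDn
  linarith [norm_nonneg F0]

theorem stmt_4
    {X : Type} [NormedAddCommGroup X] [InnerProductSpace ℂ X] [CompleteSpace X] [Nontrivial X]
    (x1 x0 : ℕ → X) (u0 : ℕ → ℂ)
    (hx1B : Bessel x1) (hx0B : Bessel x0) (hu0 : Memℓp u0 2)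
    (Ξ1 Ξ0 : l2 →L[ℂ] X) (Υ0 : l2 →L[ℂ] ℂ)
    (hΞ1 : IsSynthesis x1 Ξ1) (hΞ0 : IsSynthesis x0 Ξ0)
    (hΥ0 : ∀ w : l2, HasSum (fun k : ℕ => w k * u0 k) (Υ0 w))
    (As : X →L[ℂ] X) (Bs : ℂ →L[ℂ] X)
    (hgen : ∀ k : ℕ, x1 k = As (x0 k) + Bs (u0 k))
    (hassump :
      (∃ w : l2, Ξ0 w = 0 ∧ Υ0 w ≠ 0) ∨
      {p : (X →L[ℂ] X) × (ℂ →L[ℂ] X) | ∀ k : ℕ, x1 k = p.1 (x0 k) + p.2 (u0 k)} ≠ {(As, Bs)})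
    (γ : ℝ) (hγ0 : 0 < γ) (hγ1 : γ < 1) :
    -- informativity for stabilization with decay rate γ
    (∃ (K : X →L[ℂ] ℂ) (M : ℝ), 1 ≤ M ∧ ∀ (A : X →L[ℂ] X) (B : ℂ →L[ℂ] X),
        (∀ k : ℕ, x1 k = A (x0 k) + B (u0 k)) →
        ∀ k : ℕ, ‖(A + B.comp K) ^ k‖ ≤ M * γ ^ k)
    ↔
    (DenseRange ⇑Ξ0 ∧
      ∃ Ξd : ↥(LinearMap.range (Ξ0 : l2 →ₗ[ℂ] X)) →ₗ[ℂ] l2,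
        (∀ x : ↥(LinearMap.range (Ξ0 : l2 →ₗ[ℂ] X)), Ξ0 (Ξd x) = (x : X)) ∧
        (∃ K' : X →L[ℂ] ℂ, ∀ x : ↥(LinearMap.range (Ξ0 : l2 →ₗ[ℂ] X)), K' (x : X) = Υ0 (Ξd x)) ∧
        (∃ F : X →L[ℂ] X, (∀ x : ↥(LinearMap.range (Ξ0 : l2 →ₗ[ℂ] X)), F (x : X) = Ξ1 (Ξd x)) ∧
          ∃ M : ℝ, 1 ≤ M ∧ ∀ k : ℕ, ‖F ^ k‖ ≤ M * γ ^ k)) := by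
  -- the fundamental relation satisfied by any pair consistent with the data
  have key : ∀ (A : X →L[ℂ] X) (B : ℂ →L[ℂ] X), (∀ k : ℕ, x1 k = A (x0 k) + B (u0 k)) →
      ∀ w : l2, Ξ1 w = A (Ξ0 w) + B (Υ0 w) := by
    intro A B hAB w
    have h1 : HasSum (fun k => w k • A (x0 k)) (A (Ξ0 w)) := by
      simpa using (hΞ0 w).mapL A
    have h2 : HasSum (fun k => w k • B (u0 k)) (B (Υ0 w)) := by
      simpa only [← smul_eq_mul, map_smul] using (hΥ0 w).mapL B
    have h4 : HasSum (fun k => w k • x1 k) (A (Ξ0 w) + B (Υ0 w)) := by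
      simpa [hAB, smul_add] using h1.add h2
    exact (hΞ1 w).unique h4
  -- x0 k is in the range of Ξ0
  have hx0r : ∀ k : ℕ, Ξ0 (lp.single 2 k (1:ℂ)) = x0 k := by
    intro k
    have h2 : HasSum (fun j : ℕ => (lp.single 2 k (1:ℂ) : ∀ _ : ℕ, ℂ) j • x0 j) (x0 k) := by
      convert hasSum_ite_eq k (x0 k) using 2 with j
      by_cases h : j = k
      · subst h; simp [lp.single_apply_self]
      · simp [lp.single_apply_ne 2 k _ h, if_neg h, Pi.single_apply, h]
    exact (hΞ0 (lp.single 2 k (1:ℂ))).unique h2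
  constructor
  · -- forward direction
    rintro ⟨K, M, hM, hKM⟩
    have bdd1 : ∀ (A : X →L[ℂ] X) (B : ℂ →L[ℂ] X),
        (∀ k : ℕ, x1 k = A (x0 k) + B (u0 k)) → ‖A + B.comp K‖ ≤ M * γ := by
      intro A B h
      simpa using hKM A B h 1
    -- dense range
    have hdense : DenseRange ⇑Ξ0 := by
      by_contra hnd
      have hcl : (LinearMap.range (Ξ0 : l2 →ₗ[ℂ] X)).topologicalClosure ≠ ⊤ := by
        intro h
        exact hnd (by
          have := Submodule.dense_iff_topologicalClosure_eq_top.mpr h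
          simpa [LinearMap.coe_range, DenseRange] using this)
      have horth : (LinearMap.range (Ξ0 : l2 →ₗ[ℂ] X))ᗮ ≠ ⊥ := by
        intro h
        exact hcl (Submodule.topologicalClosure_eq_top_iff.mpr h)
      obtain ⟨z, hz, hz0⟩ := Submodule.exists_mem_ne_zero_of_ne_bot horth
      set P : X →L[ℂ] X := (innerSL ℂ z).smulRight z with hP
      have hPx0 : ∀ k, P (x0 k) = 0 := by
        intro k
        have hm : x0 k ∈ LinearMap.range (Ξ0 : l2 →ₗ[ℂ] X) := ⟨lp.single 2 k (1:ℂ), hx0r k⟩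
        have : (inner ℂ z (x0 k) : ℂ) = 0 := by
          have := (Submodule.mem_orthogonal _ z).mp hz (x0 k) hm
          rw [← inner_conj_symm, this, map_zero]
        simp [hP, this]
      have hb : ∀ t : ℂ, ‖(As + Bs.comp K) + t • P‖ ≤ M * γ := by
        intro t
        have hmem : ∀ k : ℕ, x1 k = (As + t • P) (x0 k) + Bs (u0 k) := by
          intro k
          simp [ContinuousLinearMap.add_apply, hPx0 k, hgen k]
        have := bdd1 (As + t • P) Bs hmem
        have heq : (As + t • P) + Bs.comp K = (As + Bs.comp K) + t • P := by abel
        rwa [heq] at this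
      have hP0 := zero_of_unif_bdd _ _ _ hb
      have : P z = 0 := by rw [hP0]; simp
      rw [hP] at this
      simp only [ContinuousLinearMap.smulRight_apply, innerSL_apply_apply] at this
      have hzz : (inner ℂ z z : ℂ) ≠ 0 := inner_self_ne_zero.mpr hz0
      exact hz0 ((smul_eq_zero.mp this).resolve_left hzz)
    -- constancy of the closed loop over the consistent set
    have hconst : ∀ (A : X →L[ℂ] X) (B : ℂ →L[ℂ] X),
        (∀ k : ℕ, x1 k = A (x0 k) + B (u0 k)) →
        A + B.comp K = As + Bs.comp K := by
      intro A B hAB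
      have hmem : ∀ t : ℂ, ∀ k : ℕ,
          x1 k = (As + t • (A - As)) (x0 k) + (Bs + t • (B - Bs)) (u0 k) := by
        intro t k
        have hrw : (As + t • (A - As)) (x0 k) + (Bs + t • (B - Bs)) (u0 k)
            = (As (x0 k) + Bs (u0 k)) + t • ((A (x0 k) + B (u0 k)) - (As (x0 k) + Bs (u0 k))) := by
          simp only [ContinuousLinearMap.add_apply, ContinuousLinearMap.smul_apply,
            ContinuousLinearMap.sub_apply, smul_sub, smul_add]
          abel
        rw [hrw, ← hgen k, ← hAB k, sub_self, smul_zero, add_zero]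
      have hb : ∀ t : ℂ, ‖(As + Bs.comp K) + t • ((A - As) + (B - Bs).comp K)‖ ≤ M * γ := by
        intro t
        have := bdd1 _ _ (hmem t)
        have heq : (As + t • (A - As)) + (Bs + t • (B - Bs)).comp K
            = (As + Bs.comp K) + t • ((A - As) + (B - Bs).comp K) := by
          rw [ContinuousLinearMap.add_comp, ContinuousLinearMap.smul_comp, smul_add]
          abel
        rwa [heq] at this
      have hD := zero_of_unif_bdd _ _ _ hb
      have : A + B.comp K = (As + Bs.comp K) + ((A - As) + (B - Bs).comp K) := by
        rw [ContinuousLinearMap.sub_comp]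
        abel
      rw [this, hD, add_zero]
    -- a linear section of Ξ0
    obtain ⟨g, hgsec⟩ : ∃ g : ↥(LinearMap.range (Ξ0 : l2 →ₗ[ℂ] X)) →ₗ[ℂ] l2,
        ∀ x : ↥(LinearMap.range (Ξ0 : l2 →ₗ[ℂ] X)), Ξ0 (g x) = (x : X) := by
      obtain ⟨g, hg⟩ := (Ξ0 : l2 →ₗ[ℂ] X).rangeRestrict.exists_rightInverse_of_surjective
        (LinearMap.range_rangeRestrict _)
      refine ⟨g, fun x => ?_⟩
      have := LinearMap.ext_iff.mp hg x
      simpa using congrArg Subtype.val this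
    -- build the pseudoinverse with the right feedback property
    have hΞd : ∃ Ξd : ↥(LinearMap.range (Ξ0 : l2 →ₗ[ℂ] X)) →ₗ[ℂ] l2,
        (∀ x : ↥(LinearMap.range (Ξ0 : l2 →ₗ[ℂ] X)), Ξ0 (Ξd x) = (x : X)) ∧
        (∀ x : ↥(LinearMap.range (Ξ0 : l2 →ₗ[ℂ] X)), Υ0 (Ξd x) = K (x : X)) := by
      rcases hassump with ⟨w0, hw0Ξ, hw0Υ⟩ | hne
      · -- case (i): kernel direction with nonzero Υ0
        set φ : ↥(LinearMap.range (Ξ0 : l2 →ₗ[ℂ] X)) →ₗ[ℂ] ℂ :=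
          (Υ0 w0)⁻¹ • ((Υ0 : l2 →ₗ[ℂ] ℂ) ∘ₗ g - (K : X →ₗ[ℂ] ℂ) ∘ₗ (LinearMap.range (Ξ0 : l2 →ₗ[ℂ] X)).subtype)
          with hφ
        refine ⟨g - φ.smulRight w0, fun x => ?_, fun x => ?_⟩
        · simp only [LinearMap.sub_apply, LinearMap.smulRight_apply, map_sub, map_smul, hw0Ξ,
            smul_zero, sub_zero]
          exact hgsec x
        · simp only [LinearMap.sub_apply, LinearMap.smulRight_apply, map_sub, map_smul]
          rw [hφ]
          simp only [LinearMap.smul_apply, LinearMap.sub_apply, LinearMap.coe_comp,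
            Function.comp_apply, ContinuousLinearMap.coe_coe, Submodule.coe_subtype]
          simp only [smul_eq_mul]
          field_simp
          ring
      · -- case (ii): the consistent set is not a singleton
        obtain ⟨⟨A, B⟩, hABmem, hABne⟩ :
            ∃ p : (X →L[ℂ] X) × (ℂ →L[ℂ] X),
              (∀ k : ℕ, x1 k = p.1 (x0 k) + p.2 (u0 k)) ∧ p ≠ (As, Bs) := by
          by_contra hc
          push_neg at hc
          apply hne
          apply Set.eq_singleton_iff_unique_mem.mpr
          exact ⟨hgen, fun p hp => hc p hp⟩
        have hD : (A - As) + (B - Bs).comp K = 0 := by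
          have h1 := hconst A B hABmem
          have : A + B.comp K - (As + Bs.comp K) = 0 := by rw [h1]; abel
          rw [← this, ContinuousLinearMap.sub_comp]
          abel
        have hBne : B - Bs ≠ 0 := by
          intro h0
          apply hABne
          have hA : A - As = 0 := by
            have := hD
            rw [h0, ContinuousLinearMap.zero_comp, add_zero] at this
            exact this
          have : A = As := by rwa [sub_eq_zero] at hA
          have hB : B = Bs := by rwa [sub_eq_zero] at h0
          simp [this, hB]
        have hb1 : (B - Bs) 1 ≠ 0 := by
          intro h1
          apply hBne
          refine ContinuousLinearMap.ext fun c => ?_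
          have : (B - Bs) c = c • (B - Bs) 1 := by
            rw [← map_smul, smul_eq_mul, mul_one]
          rw [this, h1, smul_zero]
          rfl
        have hid : ∀ w : l2, Υ0 w = K (Ξ0 w) := by
          intro w
          have h1 := key A B hABmem w
          have h2 := key As Bs hgen w
          have h12 : A (Ξ0 w) + B (Υ0 w) = As (Ξ0 w) + Bs (Υ0 w) := h1.symm.trans h2
          have hrel : (A - As) (Ξ0 w) + (B - Bs) (Υ0 w) = 0 := by
            simp only [ContinuousLinearMap.sub_apply]
            rw [sub_add_sub_comm, h12, sub_self]
          have hDy : (A - As) (Ξ0 w) + (B - Bs) (K (Ξ0 w)) = 0 := by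
            have := ContinuousLinearMap.ext_iff.mp hD (Ξ0 w)
            simpa using this
          have h5 : (B - Bs) (Υ0 w - K (Ξ0 w)) = 0 := by
            rw [map_sub]
            have hre : (B - Bs) (Υ0 w) - (B - Bs) (K (Ξ0 w))
                = ((A - As) (Ξ0 w) + (B - Bs) (Υ0 w))
                  - ((A - As) (Ξ0 w) + (B - Bs) (K (Ξ0 w))) := by abel
            rw [hre, hrel, hDy, sub_self]
          have h6 : (Υ0 w - K (Ξ0 w)) • (B - Bs) 1 = 0 := by
            have hms : (Υ0 w - K (Ξ0 w)) • (B - Bs) 1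
                = (B - Bs) ((Υ0 w - K (Ξ0 w)) • (1 : ℂ)) := (map_smul _ _ _).symm
            rw [hms, smul_eq_mul, mul_one]
            exact h5
          have h7 := (smul_eq_zero.mp h6).resolve_right hb1
          exact sub_eq_zero.mp h7
        refine ⟨g, hgsec, fun x => ?_⟩
        rw [hid (g x), hgsec x]
    obtain ⟨Ξd, hΞd0, hΥK⟩ := hΞd
    refine ⟨hdense, Ξd, hΞd0, ⟨K, fun x => (hΥK x).symm⟩,
      ⟨As + Bs.comp K, fun x => ?_, M, hM, fun k => hKM As Bs hgen k⟩⟩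
    have h := key As Bs hgen (Ξd x)
    rw [h, hΞd0 x, hΥK x]
    simp
  · -- backward direction
    rintro ⟨hdense, Ξd, hΞd, ⟨K', hK'⟩, ⟨F, hF, M, hM, hFpow⟩⟩
    refine ⟨K', M, hM, ?_⟩
    intro A B hAB k
    have heq : A + B.comp K' = F := by
      have heqon : Set.EqOn ⇑(A + B.comp K') ⇑F (Set.range ⇑Ξ0) := by
        rintro x ⟨w, rfl⟩
        set xs : ↥(LinearMap.range (Ξ0 : l2 →ₗ[ℂ] X)) := ⟨Ξ0 w, ⟨w, rfl⟩⟩ with hxs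
        have hcoe : (xs : X) = Ξ0 w := rfl
        have h1 := key A B hAB (Ξd xs)
        have h2 := hF xs
        have h3 := hK' xs
        have h4 := hΞd xs
        rw [hcoe] at h2 h3 h4
        simp only [ContinuousLinearMap.add_apply, ContinuousLinearMap.comp_apply]
        rw [h3, h2, h1, h4]
      have hfun := Continuous.ext_on hdense (A + B.comp K').continuous F.continuous heqon
      exact ContinuousLinearMap.ext fun y => congrFun hfun y
    rw [heq]
    exact hFpow k
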